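/- Let X be a type and φ, ψ : X → ℝ functions. Then, in ℝ≥0∞: sInf { ENNReal.ofReal (max |s| |t|) : (s,t) ∈ ℝ × ℝ, 0 ≤ s + t, (∀ x, φ(x) ≤ ψ(x) + s), and (∀ x, ψ(x) ≤ φ(x) + t) } = ⨆_{x ∈ X} ENNReal.ofReal |φ(x) − ψ(x)|. -/
import Mathlib


open scoped ENNReal

/-- The interleaving distance on real-valued functions on `X` induced by the
translation action of `ℝ` on the poset `ℝ` (with weight `|t|`) equals the sup-norm distance. -/
theorem stmt_15 {X : Type*} (φ ψ : X → ℝ) :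
    sInf {e : ℝ≥0∞ | ∃ s t : ℝ, 0 ≤ s + t ∧ (∀ x, φ x ≤ ψ x + s) ∧ (∀ x, ψ x ≤ φ x + t) ∧
        e = ENNReal.ofReal (max |s| |t|)} =
      ⨆ x : X, ENNReal.ofReal |φ x - ψ x| := by
  set L := ⨆ x : X, ENNReal.ofReal |φ x - ψ x| with hL
  apply le_antisymm
  · apply ENNReal.le_of_forall_pos_le_add
    intro ε hε hLfin
    set M := L.toReal with hM
    have hM0 : 0 ≤ M := ENNReal.toReal_nonneg
    have habs : ∀ x, |φ x - ψ x| ≤ M := by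
      intro x
      have h1 : ENNReal.ofReal |φ x - ψ x| ≤ L := le_iSup (fun x => ENNReal.ofReal |φ x - ψ x|) x
      exact (ENNReal.ofReal_le_iff_le_toReal hLfin.ne).mp h1
    set r := M + (ε : ℝ) with hr
    have hr0 : 0 ≤ r := by positivity
    have hmem : ENNReal.ofReal r ∈ {e : ℝ≥0∞ | ∃ s t : ℝ, 0 ≤ s + t ∧ (∀ x, φ x ≤ ψ x + s) ∧
        (∀ x, ψ x ≤ φ x + t) ∧ e = ENNReal.ofReal (max |s| |t|)} := by
      refine ⟨r, r, by linarith, ?_, ?_, ?_⟩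
      · intro x
        have : φ x - ψ x ≤ M := by linarith [le_abs_self (φ x - ψ x), habs x]
        have hεpos : (0:ℝ) ≤ (ε : ℝ) := ε.coe_nonneg
        linarith
      · intro x
        have : ψ x - φ x ≤ M := by linarith [neg_abs_le (φ x - ψ x), habs x]
        have hεpos : (0:ℝ) ≤ (ε : ℝ) := ε.coe_nonneg
        linarith
      · rw [max_self, abs_of_nonneg hr0]
    calc sInf _ ≤ ENNReal.ofReal r := sInf_le hmem
      _ = ENNReal.ofReal M + ENNReal.ofReal (ε : ℝ) := ENNReal.ofReal_add hM0 ε.coe_nonneg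
      _ = L + ε := by rw [ENNReal.ofReal_toReal hLfin.ne, ENNReal.ofReal_coe_nnreal]
  · apply le_sInf
    rintro e ⟨s, t, hst, h1, h2, rfl⟩
    apply iSup_le
    intro x
    apply ENNReal.ofReal_le_ofReal
    have hs : φ x - ψ x ≤ max |s| |t| := le_trans (by linarith [h1 x]) (le_trans (le_abs_self s) (le_max_left _ _))
    have ht : ψ x - φ x ≤ max |s| |t| := le_trans (by linarith [h2 x]) (le_trans (le_abs_self t) (le_max_right _ _))
    exact abs_sub_le_iff.mpr ⟨hs, ht⟩
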